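/- Let $G:[0,\infty)\to\mathbb{R}$ be convex, nonincreasing, with $G(0)=1$. Fix $s \le 1$, let $h$ be the secant line of $G$ through the points at $s$ and $s+1/2$, and suppose additionally that $G(s) = \frac1\kappa\sum_i e^{-w_i\kappa s}$ for nonnegative $w_i$ summing to 1. Then for any $0 \le \delta \le 1/4$, $h(s+\delta) - G(s+\delta) \ge \frac{\delta^2}{2}\left[G(1/2) - G(1)\right]^2$. -/

import Mathlib

theorem stmt8 (κ : ℕ) (hκ : 0 < κ) (w : Fin κ → ℝ) (hw : ∀ i, 0 ≤ w i)
    (hsum : ∑ i, w i = 1) (G : ℝ → ℝ)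
    (hG : ∀ s, G s = (1 / κ) * ∑ i, Real.exp (-(w i * κ * s)))
    (hGconv : ConvexOn ℝ (Set.Ici (0 : ℝ)) G)
    (hGanti : AntitoneOn G (Set.Ici (0 : ℝ)))
    (hG0 : G 0 = 1)
    (s : ℝ) (hs0 : 0 ≤ s) (hs1 : s ≤ 1)
    (h : ℝ → ℝ)
    (hsec : ∀ x, h x = G s + 2 * (G (s + 1 / 2) - G s) * (x - s)) :
    ∀ δ : ℝ, 0 ≤ δ → δ ≤ 1 / 4 →
      h (s + δ) - G (s + δ) ≥ (δ ^ 2 / 2) * (G (1 / 2) - G 1) ^ 2 := by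
  intro δ hδ0 hδ1
  have hκR : (0:ℝ) < κ := by exact_mod_cast hκ
  -- per-term inequality
  have key : ∀ i, (Real.exp (-(w i * κ * (1/2))) - Real.exp (-(w i * κ * 1)))^2
      ≤ 32 * (Real.exp (-(w i * κ * s))/2 + Real.exp (-(w i * κ * (s+1/2)))/2
           - Real.exp (-(w i * κ * (s+1/4)))) := by
    intro i
    set t := w i * (κ:ℝ) with htdef
    have ht : 0 ≤ t := mul_nonneg (hw i) hκR.le
    set u := Real.exp (-(t/4)) with hudef
    set v := Real.exp (-(t*s)) with hvdef
    have hu0 : 0 < u := Real.exp_pos _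
    have hu1 : u ≤ 1 := by
      rw [hudef, show (1:ℝ) = Real.exp 0 from (Real.exp_zero).symm]
      exact Real.exp_le_exp.mpr (by linarith)
    have e1 : Real.exp (-(t*(1/2))) = u^2 := by
      rw [show -(t*(1/2)) = -(t/4) + -(t/4) from by ring, Real.exp_add]; rw [hudef]; ring
    have e2 : Real.exp (-(t*1)) = u^4 := by
      rw [show -(t*1) = -(t/4) + -(t/4) + -(t/4) + -(t/4) from by ring, Real.exp_add,
        Real.exp_add, Real.exp_add]; rw [hudef]; ring
    have e3 : Real.exp (-(t*(s+1/2))) = v * u^2 := by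
      rw [show -(t*(s+1/2)) = -(t*s) + -(t/4) + -(t/4) from by ring, Real.exp_add,
        Real.exp_add]; rw [hudef, hvdef]; ring
    have e4 : Real.exp (-(t*(s+1/4))) = v * u := by
      rw [show -(t*(s+1/4)) = -(t*s) + -(t/4) from by ring, Real.exp_add]
    have e5 : u^4 ≤ v := by
      rw [← e2, hvdef]
      exact Real.exp_le_exp.mpr (by nlinarith)
    rw [e1, e2, e3, e4]
    nlinarith [mul_nonneg (sq_nonneg (1-u)) (sub_nonneg.mpr e5),
      mul_nonneg (mul_nonneg (mul_nonneg (pow_nonneg hu0.le 4) (sq_nonneg (1-u)))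
        (by linarith : (0:ℝ) ≤ 3 - u)) (by linarith : (0:ℝ) ≤ 5 + u)]
  -- sums
  set a : Fin κ → ℝ := fun i =>
    Real.exp (-(w i * κ * (1/2))) - Real.exp (-(w i * κ * 1)) with hadef
  set b : Fin κ → ℝ := fun i =>
    Real.exp (-(w i * κ * s))/2 + Real.exp (-(w i * κ * (s+1/2)))/2
      - Real.exp (-(w i * κ * (s+1/4))) with hbdef
  have h1 : (∑ i, a i)^2 ≤ (κ:ℝ) * ∑ i, (a i)^2 := by
    have := sq_sum_le_card_mul_sum_sq (s := (Finset.univ : Finset (Fin κ))) (f := a)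
    simpa using this
  have h2 : ∑ i, (a i)^2 ≤ ∑ i, 32 * b i := Finset.sum_le_sum fun i _ => key i
  have h3 : (∑ i, a i)^2 ≤ 32 * (κ:ℝ) * ∑ i, b i := by
    calc (∑ i, a i)^2 ≤ (κ:ℝ) * ∑ i, (a i)^2 := h1
      _ ≤ (κ:ℝ) * ∑ i, 32 * b i := by
          exact mul_le_mul_of_nonneg_left h2 hκR.le
      _ = 32 * (κ:ℝ) * ∑ i, b i := by rw [← Finset.mul_sum]; ring
  have hGdiff : G (1/2) - G 1 = (1/(κ:ℝ)) * ∑ i, a i := by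
    rw [hG (1/2), hG 1, hadef, ← mul_sub, ← Finset.sum_sub_distrib]
  have hGb : (G s + G (s+1/2))/2 - G (s+1/4) = (1/(κ:ℝ)) * ∑ i, b i := by
    rw [hG s, hG (s+1/2), hG (s+1/4), hbdef]
    rw [Finset.sum_sub_distrib, Finset.sum_add_distrib, ← Finset.sum_div, ← Finset.sum_div]
    ring
  have hDA : (G (1/2) - G 1)^2 ≤ 32 * ((G s + G (s+1/2))/2 - G (s+1/4)) := by
    rw [hGdiff, hGb, mul_pow,
      show (32:ℝ) * ((1/(κ:ℝ)) * ∑ i, b i) = (1/(κ:ℝ))^2 * (32 * (κ:ℝ) * ∑ i, b i) from by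
        field_simp]
    exact mul_le_mul_of_nonneg_left h3 (by positivity)
  -- convexity step
  have heq : (1 - 4*δ) * s + (4*δ) * (s + 1/4) = s + δ := by ring
  have hcvx : G (s + δ) ≤ (1 - 4*δ) * G s + (4*δ) * G (s + 1/4) := by
    have h4 := hGconv.2 (Set.mem_Ici.2 hs0)
      (Set.mem_Ici.2 (by linarith : (0:ℝ) ≤ s + 1/4))
      (by linarith : (0:ℝ) ≤ 1 - 4*δ) (by linarith : (0:ℝ) ≤ 4*δ) (by ring)
    simp only [smul_eq_mul] at h4
    rwa [heq] at h4
  rw [ge_iff_le, hsec]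
  nlinarith [hcvx, hDA, mul_nonneg hδ0 (by linarith [hDA] :
      (0:ℝ) ≤ 32 * ((G s + G (s+1/2))/2 - G (s+1/4)) - (G (1/2) - G 1)^2),
    mul_nonneg (mul_nonneg hδ0 (by linarith : (0:ℝ) ≤ 1 - 4*δ))
      (sq_nonneg (G (1/2) - G 1))]
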